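/- Every connected graph G with n vertices and m edges has a cut of size at least m/2 + (n-1)/4 (the Edwards–Erdős bound). -/

import Mathlib

open Classical in
/-- The size of the cut determined by `U`: the number of edges of `G` with exactly one
endpoint in `U`. -/
noncomputable def cutSize {V : Type*} [Fintype V] (G : SimpleGraph V) (U : Finset V) : ℕ :=
  (G.edgeFinset.filter (fun e => ∃ u v, e = s(u, v) ∧ u ∈ U ∧ v ∉ U)).card

set_option linter.unusedSectionVars false
set_option linter.unusedVariables false
set_option maxHeartbeats 1000000

attribute [local instance] Classical.propDecidable

namespace EE

variable {V : Type*} (G : SimpleGraph V)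

/-- neighbors of `v` inside `S` -/
noncomputable def nbrIn (S : Finset V) (v : V) : Finset V := S.filter (fun w => G.Adj v w)

def linkIn (S : Finset V) (a b : V) : Prop := a ∈ S ∧ b ∈ S ∧ G.Adj a b

abbrev reachIn (S : Finset V) : V → V → Prop := Relation.ReflTransGen (linkIn G S)

def connIn (S : Finset V) : Prop := ∀ a ∈ S, ∀ b ∈ S, reachIn G S a b

variable {G}

lemma linkIn_symm {S : Finset V} {a b : V} (h : linkIn G S a b) : linkIn G S b a :=
  ⟨h.2.1, h.1, h.2.2.symm⟩

lemma reachIn_symm {S : Finset V} {a b : V} (h : reachIn G S a b) : reachIn G S b a := by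
  induction h with
  | refl => exact Relation.ReflTransGen.refl
  | tail _ hl ih => exact (Relation.ReflTransGen.single (linkIn_symm hl)).trans ih

lemma reachIn_mono {S T : Finset V} (hST : S ⊆ T) {a b : V} (h : reachIn G S a b) :
    reachIn G T a b := by
  induction h with
  | refl => exact Relation.ReflTransGen.refl
  | tail _ hl ih => exact ih.tail ⟨hST hl.1, hST hl.2.1, hl.2.2⟩

lemma connIn_insert {T : Finset V} {x y : V} (hT : connIn G T) (hy : y ∈ T)
    (hxy : G.Adj x y) : connIn G (insert x T) := by
  have hx : x ∈ insert x T := Finset.mem_insert_self x T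
  have hstep : reachIn G (insert x T) x y :=
    Relation.ReflTransGen.single ⟨hx, Finset.mem_insert_of_mem hy, hxy⟩
  have hxt : ∀ t ∈ T, reachIn G (insert x T) x t := fun t ht =>
    hstep.trans (reachIn_mono (Finset.subset_insert x T) (hT y hy t ht))
  intro a ha b hb
  rcases Finset.mem_insert.mp ha with ha' | ha' <;>
    rcases Finset.mem_insert.mp hb with hb' | hb'
  · subst ha'; subst hb'; exact Relation.ReflTransGen.refl
  · subst ha'; exact hxt b hb'
  · subst hb'; exact reachIn_symm (hxt a ha')
  · exact reachIn_mono (Finset.subset_insert x T) (hT a ha' b hb')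

/-- every vertex of a connected set with another vertex has a neighbor in the set -/
lemma exists_nbr {S : Finset V} (hconn : connIn G S) {v b : V} (hv : v ∈ S) (hb : b ∈ S)
    (hne : v ≠ b) : (nbrIn G (S.erase v) v).Nonempty := by
  have h := hconn v hv b hb
  rcases Relation.ReflTransGen.cases_head h with rfl | ⟨x, hl, _⟩
  · exact absurd rfl hne
  · refine ⟨x, Finset.mem_filter.mpr ⟨Finset.mem_erase.mpr ⟨?_, hl.2.1⟩, hl.2.2⟩⟩
    exact fun hxv => G.irrefl (hxv ▸ hl.2.2)

variable (G) in
def reachN (S : Finset V) (c : V) : ℕ → V → Prop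
  | 0 => fun x => x = c
  | n+1 => fun x => reachN S c n x ∨ ∃ y, reachN S c n y ∧ y ∈ S ∧ x ∈ S ∧ G.Adj y x

lemma reachN_zero {S : Finset V} {c x : V} : reachN G S c 0 x ↔ x = c := Iff.rfl

lemma reachN_succ {S : Finset V} {c x : V} {n : ℕ} :
    reachN G S c (n+1) x ↔
      reachN G S c n x ∨ ∃ y, reachN G S c n y ∧ y ∈ S ∧ x ∈ S ∧ G.Adj y x := Iff.rfl

lemma reachN_of_reachIn {S : Finset V} {c x : V} (h : reachIn G S c x) :
    ∃ n, reachN G S c n x := by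
  induction h with
  | refl => exact ⟨0, rfl⟩
  | tail _ hl ih =>
      obtain ⟨n, hn⟩ := ih
      exact ⟨n + 1, Or.inr ⟨_, hn, hl.1, hl.2.1, hl.2.2⟩⟩

lemma exists_noncut {S : Finset V} {c : V} (hconn : connIn G S) (hcard : 2 ≤ S.card)
    (hc : c ∈ S) : ∃ v ∈ S.erase c, connIn G (S.erase v) := by
  have hex : ∀ x ∈ S, ∃ n, reachN G S c n x := fun x hx => reachN_of_reachIn (hconn c hc x hx)
  set f : V → ℕ := fun x => if hx : x ∈ S then Nat.find (hex x hx) else 0 with hf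
  have hne : (S.erase c).Nonempty := by
    rw [← Finset.card_pos, Finset.card_erase_of_mem hc]; omega
  obtain ⟨v, hv, hvmax⟩ := Finset.exists_max_image (S.erase c) f hne
  have hvS : v ∈ S := Finset.mem_of_mem_erase hv
  have hvc : v ≠ c := Finset.ne_of_mem_erase hv
  have fc : f c = 0 := by
    simp only [hf]
    rw [dif_pos hc, Nat.find_eq_zero]
    exact rfl
  have key : ∀ n, ∀ x ∈ S.erase v, f x = n → reachIn G (S.erase v) c x := by
    intro n
    induction n using Nat.strong_induction_on with
    | _ n ih =>
      intro x hx hfx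
      have hxS : x ∈ S := Finset.mem_of_mem_erase hx
      have hfind : f x = Nat.find (hex x hxS) := by simp only [hf]; rw [dif_pos hxS]
      cases n with
      | zero =>
        have h0 : reachN G S c 0 x := by
          have h2 := Nat.find_spec (hex x hxS)
          have h1 : Nat.find (hex x hxS) = 0 := by omega
          rwa [h1] at h2
        exact reachN_zero.mp h0 ▸ Relation.ReflTransGen.refl
      | succ m =>
        have hspec : reachN G S c (m+1) x := by
          have h2 := Nat.find_spec (hex x hxS)
          have h1 : Nat.find (hex x hxS) = m + 1 := by omega
          rwa [h1] at h2
        have hxc : x ≠ c := by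
          intro h; rw [h, fc] at hfx; omega
        rcases hspec with hm | ⟨y, hym, hyS, hxS', hadj⟩
        · have h9 : Nat.find (hex x hxS) ≤ m := Nat.find_le hm; omega
        · have hfy : f y ≤ m := by
            have h1 : Nat.find (hex y hyS) ≤ m := Nat.find_le hym
            have h2 : f y = Nat.find (hex y hyS) := by simp only [hf]; rw [dif_pos hyS]
            omega
          have hyv : y ≠ v := by
            intro h
            have hxev : x ∈ S.erase c := Finset.mem_erase.mpr ⟨hxc, hxS⟩
            have h3 := hvmax x hxev
            subst h
            omega
          have hreach : reachIn G (S.erase v) c y :=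
            ih (f y) (by omega) y (Finset.mem_erase.mpr ⟨hyv, hyS⟩) rfl
          exact hreach.tail ⟨Finset.mem_erase.mpr ⟨hyv, hyS⟩, hx, hadj⟩
  refine ⟨v, hv, ?_⟩
  intro a ha b hb
  exact (reachIn_symm (key (f a) a ha rfl)).trans (key (f b) b hb rfl)


section Fin
variable [Fintype V]

variable (G) in
noncomputable def edgesIn (S : Finset V) : Finset (Sym2 V) :=
  G.edgeFinset.filter (fun e => ∀ x ∈ e, x ∈ S)


lemma card_edgesIn_erase {S : Finset V} {v : V} (hv : v ∈ S) :
    (edgesIn G S).card = (edgesIn G (S.erase v)).card + (nbrIn G (S.erase v) v).card := by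
  classical
  have hsplit := Finset.card_filter_add_card_filter_not
    (s := edgesIn G S) (p := fun e => v ∈ e)
  have hB : (edgesIn G S).filter (fun e => ¬ v ∈ e) = edgesIn G (S.erase v) := by
    ext e
    simp only [edgesIn, Finset.mem_filter]
    constructor
    · rintro ⟨⟨he, hall⟩, hve⟩
      exact ⟨he, fun x hx => Finset.mem_erase.mpr ⟨fun h => hve (h ▸ hx), hall x hx⟩⟩
    · rintro ⟨he, hall⟩
      refine ⟨⟨he, fun x hx => Finset.mem_of_mem_erase (hall x hx)⟩, fun hve => ?_⟩
      exact (Finset.mem_erase.mp (hall v hve)).1 rfl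
  have hA : ((edgesIn G S).filter (fun e => v ∈ e)).card = (nbrIn G (S.erase v) v).card := by
    symm
    apply Finset.card_bij (fun w _ => s(v, w))
    · intro w hw
      simp only [nbrIn, Finset.mem_filter] at hw
      obtain ⟨hwS, hadj⟩ := hw
      simp only [edgesIn, Finset.mem_filter]
      refine ⟨⟨SimpleGraph.mem_edgeFinset.mpr hadj, ?_⟩, Sym2.mem_mk_left v w⟩
      intro x hx
      rcases Sym2.mem_iff.mp hx with rfl | rfl
      · exact hv
      · exact Finset.mem_of_mem_erase hwS
    · intro w hw w' hw' heq
      exact Sym2.congr_right.mp heq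
    · intro e he
      simp only [edgesIn, Finset.mem_filter] at he
      obtain ⟨⟨he1, hall⟩, hve⟩ := he
      obtain ⟨w, rfl⟩ := Sym2.mem_iff_exists.mp hve
      have hadj : G.Adj v w := SimpleGraph.mem_edgeFinset.mp he1
      refine ⟨w, ?_, rfl⟩
      simp only [nbrIn, Finset.mem_filter]
      exact ⟨Finset.mem_erase.mpr ⟨hadj.ne', hall w (Sym2.mem_mk_right v w)⟩, hadj⟩
  rw [hB] at hsplit
  omega

lemma nbr_split {T U : Finset V} {v : V} (hU : U ⊆ T) :
    (nbrIn G T v).card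
      = (U.filter (fun u => G.Adj v u)).card + ((T \ U).filter (fun u => G.Adj v u)).card := by
  classical
  have h1 : U ∪ (T \ U) = T := Finset.union_sdiff_of_subset hU
  have h2 : nbrIn G T v = U.filter (fun u => G.Adj v u) ∪ (T \ U).filter (fun u => G.Adj v u) := by
    ext x
    simp only [nbrIn, Finset.mem_filter, Finset.mem_union, Finset.mem_sdiff]
    constructor
    · rintro ⟨hxT, ha⟩
      by_cases hx : x ∈ U
      · exact Or.inl ⟨hx, ha⟩
      · exact Or.inr ⟨⟨hxT, hx⟩, ha⟩
    · rintro (⟨hx, ha⟩ | ⟨⟨hxT, _⟩, ha⟩)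
      · exact ⟨hU hx, ha⟩
      · exact ⟨hxT, ha⟩
  rw [h2, Finset.card_union_of_disjoint]
  exact Finset.disjoint_filter_filter (Finset.disjoint_sdiff)


end Fin

noncomputable def cutP (G : SimpleGraph V) (S U : Finset V) : ℕ :=
  ∑ u ∈ U, ((S \ U).filter (fun w => G.Adj u w)).card

lemma sdiff_insert_eq {S U : Finset V} {v : V} (hvS : v ∈ S) (hvU : v ∉ U) :
    S \ U = insert v ((S.erase v) \ U) := by
  ext x
  simp only [Finset.mem_sdiff, Finset.mem_insert, Finset.mem_erase]
  constructor
  · rintro ⟨hxS, hxU⟩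
    by_cases hx : x = v
    · exact Or.inl hx
    · exact Or.inr ⟨⟨hx, hxS⟩, hxU⟩
  · rintro (rfl | ⟨⟨_, hxS⟩, hxU⟩)
    · exact ⟨hvS, hvU⟩
    · exact ⟨hxS, hxU⟩

lemma cutP_out {S U : Finset V} {v : V} (hvS : v ∈ S) (hvU : v ∉ U) :
    cutP G S U = cutP G (S.erase v) U + (U.filter (fun u => G.Adj u v)).card := by
  unfold cutP
  rw [Finset.card_filter, ← Finset.sum_add_distrib]
  apply Finset.sum_congr rfl
  intro u hu
  rw [sdiff_insert_eq hvS hvU, Finset.filter_insert]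
  by_cases hadj : G.Adj u v
  · rw [if_pos hadj, if_pos hadj, Finset.card_insert_of_notMem]
    simp only [Finset.mem_filter, Finset.mem_sdiff, Finset.mem_erase]
    rintro ⟨⟨⟨hne, _⟩, _⟩, _⟩
    exact hne rfl
  · rw [if_neg hadj, if_neg hadj, add_zero]

lemma cutP_in {S U : Finset V} {v : V} (hvS : v ∈ S) (hvU : v ∉ U) :
    cutP G S (insert v U)
      = cutP G (S.erase v) U + (((S.erase v) \ U).filter (fun w => G.Adj v w)).card := by
  unfold cutP
  have hT : S \ insert v U = (S.erase v) \ U := by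
    ext x
    simp only [Finset.mem_sdiff, Finset.mem_insert, Finset.mem_erase]
    tauto
  rw [Finset.sum_insert hvU, hT, add_comm]


lemma mem_nbrIn {S : Finset V} {v x : V} :
    x ∈ nbrIn G S v ↔ x ∈ S ∧ G.Adj v x := Finset.mem_filter

lemma SL2 : ∀ S : Finset V, connIn G S → 2 ≤ S.card → ∀ c ∈ S,
    (∃ v ∈ S, v ≠ c ∧ Odd (nbrIn G (S.erase v) v).card ∧ connIn G (S.erase v)) ∨
    (∃ u ∈ S, ∃ v ∈ S, u ≠ c ∧ v ≠ c ∧ G.Adj u v ∧ connIn G ((S.erase u).erase v)) := by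
  intro S
  induction S using Finset.strongInduction with
  | _ S ih =>
  intro hconn hcard c hc
  obtain ⟨v, hv, hconn'⟩ := exists_noncut hconn hcard hc
  have hvS : v ∈ S := Finset.mem_of_mem_erase hv
  have hvc : v ≠ c := Finset.ne_of_mem_erase hv
  have hcS' : c ∈ S.erase v := Finset.mem_erase.mpr ⟨Ne.symm hvc, hc⟩
  have hnbr : (nbrIn G (S.erase v) v).Nonempty := exists_nbr hconn hvS hc hvc
  by_cases hodd : Odd (nbrIn G (S.erase v) v).card
  · exact Or.inl ⟨v, hvS, hvc, hodd, hconn'⟩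
  have hd2 : 2 ≤ (nbrIn G (S.erase v) v).card := by
    rw [Nat.odd_iff] at hodd
    have := Finset.card_pos.mpr hnbr
    omega
  have hcard' : 2 ≤ (S.erase v).card :=
    le_trans hd2 (Finset.card_le_card (Finset.filter_subset _ _))
  rcases ih (S.erase v) (Finset.erase_ssubset hvS) hconn' hcard' c hcS' with
    ⟨u, huS', huc, huodd, hconnu⟩ | ⟨u, huS', w, hwS', huc, hwc, hadjuw, hconnT⟩
  · -- case: odd-degree non-cut vertex u in S.erase v
    have huS : u ∈ S := Finset.mem_of_mem_erase huS'
    have huv : u ≠ v := Finset.ne_of_mem_erase huS'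
    by_cases hadj : G.Adj u v
    · refine Or.inr ⟨u, huS, v, hvS, huc, hvc, hadj, ?_⟩
      rw [Finset.erase_right_comm]
      exact hconnu
    · refine Or.inl ⟨u, huS, huc, ?_, ?_⟩
      · have hEq : nbrIn G (S.erase u) u = nbrIn G ((S.erase v).erase u) u := by
          ext x
          simp only [mem_nbrIn, Finset.mem_erase]
          constructor
          · rintro ⟨⟨hxu, hxS⟩, ha⟩
            refine ⟨⟨hxu, ?_, hxS⟩, ha⟩
            rintro rfl; exact hadj ha
          · rintro ⟨⟨hxu, _, hxS⟩, ha⟩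
            exact ⟨⟨hxu, hxS⟩, ha⟩
        rw [hEq]; exact huodd
      · have hEq : S.erase u = insert v ((S.erase v).erase u) := by
          ext x
          simp only [Finset.mem_erase, Finset.mem_insert]
          constructor
          · rintro ⟨hxu, hxS⟩
            by_cases hxv : x = v
            · exact Or.inl hxv
            · exact Or.inr ⟨hxu, hxv, hxS⟩
          · rintro (rfl | ⟨hxu, _, hxS⟩)
            · exact ⟨Ne.symm huv, hvS⟩
            · exact ⟨hxu, hxS⟩
        rw [hEq]
        obtain ⟨y, hy⟩ := hnbr
        rw [mem_nbrIn] at hy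
        have hyu : y ≠ u := by rintro rfl; exact hadj hy.2.symm
        exact connIn_insert hconnu (Finset.mem_erase.mpr ⟨hyu, hy.1⟩) hy.2
  · -- case: removable adjacent pair u, w in S.erase v
    have huS : u ∈ S := Finset.mem_of_mem_erase huS'
    have hwS : w ∈ S := Finset.mem_of_mem_erase hwS'
    have huv : u ≠ v := Finset.ne_of_mem_erase huS'
    have hwv : w ≠ v := Finset.ne_of_mem_erase hwS'
    have huw : u ≠ w := hadjuw.ne
    set T : Finset V := ((S.erase v).erase u).erase w with hT
    have hmemT : ∀ x, x ∈ T ↔ x ≠ w ∧ x ≠ u ∧ x ≠ v ∧ x ∈ S := by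
      intro x; simp only [hT, Finset.mem_erase]; try tauto
    by_cases h1 : (nbrIn G T v).Nonempty
    · refine Or.inr ⟨u, huS, w, hwS, huc, hwc, hadjuw, ?_⟩
      have hEq : (S.erase u).erase w = insert v T := by
        ext x
        simp only [Finset.mem_erase, Finset.mem_insert, hmemT x]
        constructor
        · rintro ⟨hxw, hxu, hxS⟩
          by_cases hxv : x = v
          · exact Or.inl hxv
          · exact Or.inr ⟨hxw, hxu, hxv, hxS⟩
        · rintro (rfl | ⟨hxw, hxu, _, hxS⟩)
          · exact ⟨Ne.symm hwv, Ne.symm huv, hvS⟩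
          · exact ⟨hxw, hxu, hxS⟩
      rw [hEq]
      obtain ⟨y, hy⟩ := h1
      rw [mem_nbrIn] at hy
      exact connIn_insert hconnT hy.1 hy.2
    · have hsub : nbrIn G (S.erase v) v ⊆ {u, w} := by
        intro x hx
        rw [mem_nbrIn, Finset.mem_erase] at hx
        obtain ⟨⟨hxv, hxS⟩, ha⟩ := hx
        by_contra hxuw
        simp only [Finset.mem_insert, Finset.mem_singleton] at hxuw
        push_neg at hxuw
        exact h1 ⟨x, mem_nbrIn.mpr ⟨(hmemT x).mpr ⟨hxuw.2, hxuw.1, hxv, hxS⟩, ha⟩⟩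
      have heq : nbrIn G (S.erase v) v = {u, w} := by
        apply Finset.eq_of_subset_of_card_le hsub
        rw [Finset.card_pair huw]
        exact hd2
      have hadjvu : G.Adj v u := by
        have : u ∈ nbrIn G (S.erase v) v := by
          rw [heq]; exact Finset.mem_insert_self u {w}
        exact (mem_nbrIn.mp this).2
      have hadjvw : G.Adj v w := by
        have : w ∈ nbrIn G (S.erase v) v := by
          rw [heq]; exact Finset.mem_insert_of_mem (Finset.mem_singleton_self w)
        exact (mem_nbrIn.mp this).2
      by_cases h2 : (nbrIn G T w).Nonempty
      · refine Or.inr ⟨v, hvS, u, huS, hvc, huc, hadjvu, ?_⟩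
        have hEq : (S.erase v).erase u = insert w T := by
          ext x
          simp only [Finset.mem_erase, Finset.mem_insert, hmemT x]
          constructor
          · rintro ⟨hxu, hxv, hxS⟩
            by_cases hxw : x = w
            · exact Or.inl hxw
            · exact Or.inr ⟨hxw, hxu, hxv, hxS⟩
          · rintro (rfl | ⟨_, hxu, hxv, hxS⟩)
            · exact ⟨Ne.symm huw, hwv, hwS⟩
            · exact ⟨hxu, hxv, hxS⟩
        rw [hEq]
        obtain ⟨y, hy⟩ := h2
        rw [mem_nbrIn] at hy
        exact connIn_insert hconnT hy.1 hy.2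
      · by_cases h3 : (nbrIn G T u).Nonempty
        · refine Or.inr ⟨v, hvS, w, hwS, hvc, hwc, hadjvw, ?_⟩
          have hEq : (S.erase v).erase w = insert u T := by
            ext x
            simp only [Finset.mem_erase, Finset.mem_insert, hmemT x]
            constructor
            · rintro ⟨hxw, hxv, hxS⟩
              by_cases hxu : x = u
              · exact Or.inl hxu
              · exact Or.inr ⟨hxw, hxu, hxv, hxS⟩
            · rintro (rfl | ⟨hxw, _, hxv, hxS⟩)
              · exact ⟨huw, huv, huS⟩
              · exact ⟨hxw, hxv, hxS⟩
          rw [hEq]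
          obtain ⟨y, hy⟩ := h3
          rw [mem_nbrIn] at hy
          exact connIn_insert hconnT hy.1 hy.2
        · exfalso
          have hclosed : ∀ x : V, reachIn G S v x → x = u ∨ x = v ∨ x = w := by
            intro x hx
            induction hx with
            | refl => exact Or.inr (Or.inl rfl)
            | tail hprev hl ihx =>
              rename_i b x'
              by_contra hnx
              push_neg at hnx
              obtain ⟨hxu, hxv, hxw⟩ := hnx
              have hxT : x' ∈ T := (hmemT x').mpr ⟨hxw, hxu, hxv, hl.2.1⟩
              obtain h | h | h := ihx
              · subst h
                exact h3 ⟨x', mem_nbrIn.mpr ⟨hxT, hl.2.2⟩⟩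
              · have hadj' : G.Adj v x' := h ▸ hl.2.2
                have hmem : x' ∈ nbrIn G (S.erase v) v :=
                  mem_nbrIn.mpr ⟨Finset.mem_erase.mpr ⟨hxv, hl.2.1⟩, hadj'⟩
                rw [heq] at hmem
                simp only [Finset.mem_insert, Finset.mem_singleton] at hmem
                tauto
              · subst h
                exact h2 ⟨x', mem_nbrIn.mpr ⟨hxT, hl.2.2⟩⟩
          rcases hclosed c (hconn v hvS c hc) with rfl | rfl | rfl
          · exact huc rfl
          · exact hvc rfl
          · exact hwc rfl

section Main
variable [Fintype V]

lemma exists_good_cut : ∀ S : Finset V, connIn G S →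
    ∃ U ⊆ S, ((edgesIn G S).card : ℚ) / 2 + ((S.card : ℚ) - 1) / 4 ≤ (cutP G S U : ℚ) := by
  intro S
  induction S using Finset.strongInduction with
  | _ S ih =>
  intro hconn
  by_cases hcard : 2 ≤ S.card
  swap
  · -- base case : at most one vertex
    refine ⟨∅, Finset.empty_subset S, ?_⟩
    have hE : edgesIn G S = ∅ := by
      rw [Finset.eq_empty_iff_forall_notMem]
      intro e he
      simp only [edgesIn, Finset.mem_filter] at he
      obtain ⟨he1, hall⟩ := he
      induction e using Sym2.ind with
      | _ a b =>
        have hadj : G.Adj a b := SimpleGraph.mem_edgeFinset.mp he1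
        have hab : a ≠ b := hadj.ne
        have ha' : a ∈ S := hall a (Sym2.mem_mk_left a b)
        have hb' : b ∈ S := hall b (Sym2.mem_mk_right a b)
        have hsub : ({a, b} : Finset V) ⊆ S := by
          intro x hx
          rcases Finset.mem_insert.mp hx with h | h
          · exact h ▸ ha'
          · exact (Finset.mem_singleton.mp h) ▸ hb'
        have := Finset.card_le_card hsub
        rw [Finset.card_pair hab] at this
        omega
    have hcut : cutP G S ∅ = 0 := by simp [cutP]
    rw [hE, hcut]
    simp only [Finset.card_empty, Nat.cast_zero]
    have h1 : (S.card : ℚ) ≤ 1 := by exact_mod_cast (by omega : S.card ≤ 1)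
    linarith
  · obtain ⟨c, hc⟩ := Finset.card_pos.mp (lt_of_lt_of_le Nat.zero_lt_two hcard)
    rcases SL2 S hconn hcard c hc with
      ⟨v, hvS, _, hodd, hconn'⟩ | ⟨u, huS, w, hwS, _, _, hadjuw, hconnT⟩
    · -- odd-degree removable vertex
      obtain ⟨U, hU, hIH⟩ := ih (S.erase v) (Finset.erase_ssubset hvS) hconn'
      have hvU : v ∉ U := fun h => (Finset.mem_erase.mp (hU h)).1 rfl
      set a := (U.filter (fun u => G.Adj v u)).card with ha
      set b := (((S.erase v) \ U).filter (fun x => G.Adj v x)).card with hb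
      have hsplit : (nbrIn G (S.erase v) v).card = a + b := nbr_split hU
      have hm : (edgesIn G S).card
          = (edgesIn G (S.erase v)).card + (nbrIn G (S.erase v) v).card :=
        card_edgesIn_erase hvS
      have hs : (S.erase v).card + 1 = S.card := Finset.card_erase_add_one hvS
      have hfil : Finset.filter (fun u => G.Adj u v) U = Finset.filter (fun u => G.Adj v u) U :=
        Finset.filter_congr (fun x _ => by rw [G.adj_comm])
      have hc1 : cutP G S U = cutP G (S.erase v) U + a := by
        rw [cutP_out hvS hvU, hfil, ha]
      have hc2 : cutP G S (insert v U) = cutP G (S.erase v) U + b := cutP_in hvS hvU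
      rw [Nat.odd_iff] at hodd
      rcases le_total a b with hab | hab
      · refine ⟨insert v U, ?_, ?_⟩
        · intro x hx
          rcases Finset.mem_insert.mp hx with rfl | hx
          · exact hvS
          · exact Finset.mem_of_mem_erase (hU hx)
        · have h2b : ((a : ℚ) + b + 1) ≤ 2 * b := by exact_mod_cast (by omega : a + b + 1 ≤ 2 * b)
          rw [hc2]
          push_cast [hm, ← hs, hsplit]
          linarith
      · refine ⟨U, fun x hx => Finset.mem_of_mem_erase (hU hx), ?_⟩
        have h2a : ((a : ℚ) + b + 1) ≤ 2 * a := by exact_mod_cast (by omega : a + b + 1 ≤ 2 * a)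
        rw [hc1]
        push_cast [hm, ← hs, hsplit]
        linarith
    · -- removable adjacent pair u w
      have huw : u ≠ w := hadjuw.ne
      have hwu : w ≠ u := huw.symm
      have hwS' : w ∈ S.erase u := Finset.mem_erase.mpr ⟨hwu, hwS⟩
      have huS' : u ∈ S.erase w := Finset.mem_erase.mpr ⟨huw, huS⟩
      set T : Finset V := (S.erase u).erase w with hT
      have hTsub : T ⊂ S :=
        lt_of_le_of_lt (Finset.erase_subset w (S.erase u)) (Finset.erase_ssubset huS)
      obtain ⟨U, hU, hIH⟩ := ih T hTsub hconnT
      have huT : u ∉ T := fun h => (Finset.mem_erase.mp (Finset.mem_of_mem_erase h)).1 rfl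
      have hwT : w ∉ T := fun h => (Finset.mem_erase.mp h).1 rfl
      have huU : u ∉ U := fun h => huT (hU h)
      have hwU : w ∉ U := fun h => hwT (hU h)
      set au := (U.filter (fun x => G.Adj u x)).card with hau
      set bu := ((T \ U).filter (fun x => G.Adj u x)).card with hbu
      set aw := (U.filter (fun x => G.Adj w x)).card with haw
      set bw := ((T \ U).filter (fun x => G.Adj w x)).card with hbw
      have hsplitu : (nbrIn G T u).card = au + bu := nbr_split hU
      have hsplitw : (nbrIn G T w).card = aw + bw := nbr_split hU
      -- edge counts
      have he1 : (edgesIn G S).card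
          = (edgesIn G (S.erase u)).card + (nbrIn G (S.erase u) u).card :=
        card_edgesIn_erase huS
      have he2 : (edgesIn G (S.erase u)).card
          = (edgesIn G T).card + (nbrIn G T w).card :=
        card_edgesIn_erase hwS'
      have he3 : (nbrIn G (S.erase u) u).card = (nbrIn G T u).card + 1 := by
        have hins : nbrIn G (S.erase u) u = insert w (nbrIn G T u) := by
          ext x
          simp only [mem_nbrIn, Finset.mem_insert, hT, Finset.mem_erase]
          constructor
          · rintro ⟨⟨hxu, hxS⟩, hadj⟩
            by_cases hxw : x = w
            · exact Or.inl hxw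
            · exact Or.inr ⟨⟨hxw, hxu, hxS⟩, hadj⟩
          · rintro (rfl | ⟨⟨hxw, hxu, hxS⟩, hadj⟩)
            · exact ⟨⟨hwu, hwS⟩, hadjuw⟩
            · exact ⟨⟨hxu, hxS⟩, hadj⟩
        rw [hins, Finset.card_insert_of_notMem]
        intro h
        exact hwT (Finset.mem_filter.mp h).1
      -- cut for U1 = insert u U
      have hcut1 : cutP G S (insert u U) = cutP G T U + (aw + (bu + 1)) := by
        have s1 : cutP G S (insert u U)
            = cutP G (S.erase u) U + (((S.erase u) \ U).filter (fun x => G.Adj u x)).card :=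
          cutP_in huS huU
        have s2 : cutP G (S.erase u) U
            = cutP G T U + (U.filter (fun x => G.Adj x w)).card :=
          cutP_out hwS' hwU
        have s3 : (((S.erase u) \ U).filter (fun x => G.Adj u x)).card = bu + 1 := by
          have hsd : (S.erase u) \ U = insert w (T \ U) := sdiff_insert_eq hwS' hwU
          rw [hsd, Finset.filter_insert, if_pos hadjuw, Finset.card_insert_of_notMem]
          intro h
          exact hwT (Finset.mem_sdiff.mp (Finset.mem_filter.mp h).1).1
        have s4 : (U.filter (fun x => G.Adj x w)).card = aw := by
          rw [haw, Finset.filter_congr (fun x _ => by rw [G.adj_comm] :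
            ∀ x ∈ U, G.Adj x w ↔ G.Adj w x)]
        rw [s1, s2, s3, s4]
        ring
      -- cut for U2 = insert w U
      have hcut2 : cutP G S (insert w U) = cutP G T U + (au + (bw + 1)) := by
        have s1 : cutP G S (insert w U)
            = cutP G (S.erase w) U + (((S.erase w) \ U).filter (fun x => G.Adj w x)).card :=
          cutP_in hwS hwU
        have s2 : cutP G (S.erase w) U
            = cutP G ((S.erase w).erase u) U + (U.filter (fun x => G.Adj x u)).card :=
          cutP_out huS' huU
        have hTT : (S.erase w).erase u = T := Finset.erase_right_comm
        have s3 : (((S.erase w) \ U).filter (fun x => G.Adj w x)).card = bw + 1 := by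
          have hsd : (S.erase w) \ U = insert u (((S.erase w).erase u) \ U) :=
            sdiff_insert_eq huS' huU
          rw [hsd, hTT, Finset.filter_insert, if_pos hadjuw.symm,
            Finset.card_insert_of_notMem]
          intro h
          exact huT (Finset.mem_sdiff.mp (Finset.mem_filter.mp h).1).1
        have s4 : (U.filter (fun x => G.Adj x u)).card = au := by
          rw [hau, Finset.filter_congr (fun x _ => by rw [G.adj_comm] :
            ∀ x ∈ U, G.Adj x u ↔ G.Adj u x)]
        rw [s1, s2, hTT, s3, s4]
        ring
      have hs1 : (S.erase u).card + 1 = S.card := Finset.card_erase_add_one huS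
      have hs2 : T.card + 1 = (S.erase u).card := Finset.card_erase_add_one hwS'
      have hUS : ∀ x ∈ U, x ∈ S := fun x hx => hTsub.1 (hU hx)
      rcases le_total (aw + bu) (au + bw) with hab | hab
      · refine ⟨insert w U, ?_, ?_⟩
        · intro x hx
          rcases Finset.mem_insert.mp hx with rfl | hx
          · exact hwS
          · exact hUS x hx
        · have hab' : ((aw : ℚ) + bu) ≤ au + bw := by exact_mod_cast hab
          rw [hcut2]
          push_cast [he1, he2, he3, hsplitu, hsplitw, ← hs1, ← hs2]
          linarith
      · refine ⟨insert u U, ?_, ?_⟩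
        · intro x hx
          rcases Finset.mem_insert.mp hx with rfl | hx
          · exact huS
          · exact hUS x hx
        · have hab' : ((au : ℚ) + bw) ≤ aw + bu := by exact_mod_cast hab
          rw [hcut1]
          push_cast [he1, he2, he3, hsplitu, hsplitw, ← hs1, ← hs2]
          linarith

end Main

end EE

open Classical in
/-- Edwards–Erdős bound: every connected graph with `n` vertices and `m` edges has a cut of
size at least `m/2 + (n-1)/4`. -/
theorem exists_cut_ge_edwards_erdos {V : Type*} [Fintype V] (G : SimpleGraph V)
    (hG : G.Connected) :
    ∃ U : Finset V, (G.edgeFinset.card : ℚ) / 2 + ((Fintype.card V : ℚ) - 1) / 4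
      ≤ (cutSize G U : ℚ) := by
  classical
  have hconn : EE.connIn G Finset.univ := by
    intro a _ b _
    have h := (SimpleGraph.reachable_iff_reflTransGen a b).mp (hG.preconnected a b)
    exact Relation.ReflTransGen.mono (p := EE.linkIn G Finset.univ)
      (fun x y hxy => ⟨Finset.mem_univ x, Finset.mem_univ y, hxy⟩) _ _ h
  obtain ⟨U, _, hbound⟩ := EE.exists_good_cut Finset.univ hconn
  have hedges : EE.edgesIn G Finset.univ = G.edgeFinset := by
    rw [EE.edgesIn]
    exact Finset.filter_true_of_mem (fun e _ => fun x _ => Finset.mem_univ x)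
  have hle : EE.cutP G Finset.univ U ≤ cutSize G U := by
    set W : Finset V := Finset.univ \ U with hW
    set P : Finset (Sym2 V) :=
      U.biUnion (fun u => ((W.filter (fun w => G.Adj u w)).image (fun w => s(u, w)))) with hP
    have hPcard : P.card = EE.cutP G Finset.univ U := by
      rw [hP, Finset.card_biUnion]
      · apply Finset.sum_congr rfl
        intro u _
        exact Finset.card_image_of_injOn (fun x _ y _ hxy => Sym2.congr_right.mp hxy)
      · intro u hu u' hu' hne
        rw [Function.onFun, Finset.disjoint_left]
        intro e he he'
        obtain ⟨w, hw, rfl⟩ := Finset.mem_image.mp he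
        obtain ⟨w', hw', heq⟩ := Finset.mem_image.mp he'
        have hwU' : w' ∉ U := (Finset.mem_sdiff.mp (Finset.mem_filter.mp hw').1).2
        rcases Sym2.eq_iff.mp heq with ⟨h1, _⟩ | ⟨h1, h2⟩
        · exact hne h1.symm
        · exact hwU' (by rw [h2]; exact hu)
    have hPsub : P ⊆ G.edgeFinset.filter (fun e => ∃ x y, e = s(x, y) ∧ x ∈ U ∧ y ∉ U) := by
      intro e he
      obtain ⟨u, hu, he2⟩ := Finset.mem_biUnion.mp he
      obtain ⟨w, hw, rfl⟩ := Finset.mem_image.mp he2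
      rw [Finset.mem_filter] at hw
      have hwU : w ∉ U := (Finset.mem_sdiff.mp hw.1).2
      exact Finset.mem_filter.mpr
        ⟨SimpleGraph.mem_edgeFinset.mpr hw.2, u, w, rfl, hu, hwU⟩
    calc EE.cutP G Finset.univ U = P.card := hPcard.symm
      _ ≤ (G.edgeFinset.filter (fun e => ∃ x y, e = s(x, y) ∧ x ∈ U ∧ y ∉ U)).card :=
          Finset.card_le_card hPsub
      _ = cutSize G U := rfl
  refine ⟨U, ?_⟩
  have hle' : ((EE.cutP G Finset.univ U : ℚ)) ≤ (cutSize G U : ℚ) := by exact_mod_cast hle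
  have hb2 : ((G.edgeFinset.card : ℚ)) / 2 + ((Fintype.card V : ℚ) - 1) / 4
      ≤ ((EE.cutP G Finset.univ U : ℚ)) := by
    rw [← hedges, ← Finset.card_univ]
    exact hbound
  linarith
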